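/- Every tailed derivation of a finite-dimensional complex semisimple Lie algebra is a derivation; i.e., TDer(𝔤) = Der(𝔤) for 𝔤 semisimple over ℂ. -/

import Mathlib

open LieAlgebra LinearMap

attribute [local instance 100] LieRing.ofAssociativeRing

set_option linter.unusedSectionVars false

section aux
variable {g : Type} [LieRing g] [LieAlgebra ℂ g] [Module.Finite ℂ g]

lemma aux_trace_smulRight (f : g →ₗ[ℂ] ℂ) (v : g) :
    LinearMap.trace ℂ g (f.smulRight v) = f v := by
  have h1 : (dualTensorHom ℂ g g) (f ⊗ₜ v) = f.smulRight v := by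
    ext x; simp
  have h2 := LinearMap.trace_eq_contract_apply ℂ g (f ⊗ₜ[ℂ] v)
  rw [h1] at h2
  simpa using h2

variable [LieAlgebra.IsSemisimple ℂ g]

lemma aux_derived_top : LieAlgebra.derivedSeries ℂ g 1 = ⊤ := by
  set I := LieAlgebra.derivedSeries ℂ g 1 with hI
  have hd : I = ⁅(⊤ : LieIdeal ℂ g), (⊤ : LieIdeal ℂ g)⁆ := by
    rw [hI]; rfl
  have habel : IsLieAbelian (Iᶜ : LieIdeal ℂ g) := by
    rw [LieSubmodule.lie_abelian_iff_lie_self_eq_bot]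
    have h1 : ⁅Iᶜ, Iᶜ⁆ ≤ I := by
      rw [hd]; exact LieSubmodule.mono_lie le_top le_top
    have h2 : ⁅Iᶜ, Iᶜ⁆ ≤ Iᶜ := LieSubmodule.lie_le_left _ _
    have := le_inf h1 h2
    rwa [inf_compl_eq_bot, le_bot_iff] at this
  have hbot : Iᶜ = ⊥ :=
    (LieAlgebra.hasTrivialRadical_iff_no_abelian_ideals ℂ g).mp inferInstance Iᶜ habel
  rwa [compl_eq_bot] at hbot

lemma aux_vanish (f : g →ₗ[ℂ] ℂ) (hf : ∀ a b : g, f ⁅a, b⁆ = 0) : f = 0 := by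
  have htop : (⁅(⊤ : LieIdeal ℂ g), (⊤ : LieIdeal ℂ g)⁆ : LieIdeal ℂ g) = ⊤ := by
    have := aux_derived_top (g := g)
    rw [show LieAlgebra.derivedSeries ℂ g 1 = ⁅(⊤ : LieIdeal ℂ g), ⊤⁆ from rfl] at this
    exact this
  ext x
  have hx : x ∈ (⁅(⊤ : LieIdeal ℂ g), (⊤ : LieIdeal ℂ g)⁆ : LieIdeal ℂ g) := by
    rw [htop]; trivial
  have hx' : x ∈ Submodule.span ℂ
      {m | ∃ a ∈ (⊤ : LieIdeal ℂ g), ∃ b ∈ (⊤ : LieIdeal ℂ g), ⁅a, b⁆ = m} := by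
    rw [← LieSubmodule.lieIdeal_oper_eq_linear_span']
    exact hx
  simp only [LinearMap.zero_apply]
  refine Submodule.span_induction ?_ ?_ ?_ ?_ hx' 
  · rintro m ⟨a, -, b, -, rfl⟩; exact hf a b
  · simp
  · intro a b _ _ ha hb; rw [map_add, ha, hb, add_zero]
  · intro t a _ ha; rw [map_smul, ha, smul_zero]

lemma aux_trace_ad (x : g) : LinearMap.trace ℂ g (ad ℂ g x) = 0 := by
  have hf : ∀ a b : g,
      ((LinearMap.trace ℂ g) ∘ₗ (ad ℂ g).toLinearMap) ⁅a, b⁆ = 0 := by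
    intro a b
    simp only [LinearMap.comp_apply, LieHom.coe_toLinearMap, LieHom.map_lie]
    rw [Ring.lie_def, map_sub, LinearMap.trace_mul_comm, sub_self]
  have h0 := aux_vanish _ hf
  have : ((LinearMap.trace ℂ g) ∘ₗ (ad ℂ g).toLinearMap) x = 0 := by rw [h0]; rfl
  simpa using this

end aux

/-- every tailed derivation of a finite-dimensional complex semisimple Lie
algebra is a derivation: the tail is zero and `D` satisfies the Leibniz rule. -/
theorem tailedDer_eq_der_of_semisimple
    {g : Type} [LieRing g] [LieAlgebra ℂ g] [Module.Finite ℂ g]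
    [LieAlgebra.IsSemisimple ℂ g]
    (D : g →ₗ[ℂ] g) (d : g →ₗ[ℂ] ℂ)
    (h : ∀ y z : g, D ⁅y, z⁆ = ⁅D y, z⁆ + ⁅y, D z⁆ + d z • y - d y • z) :
    d = 0 ∧ ∀ y z : g, D ⁅y, z⁆ = ⁅D y, z⁆ + ⁅y, D z⁆ := by
  have key : ∀ y z w : g, d ⁅y, z⁆ • w =
      d z • ⁅y, w⁆ - d y • ⁅z, w⁆ - d w • ⁅y, z⁆ - d ⁅z, w⁆ • y + d ⁅y, w⁆ • z := by
    intro y z w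
    have e0 : D ⁅⁅y, z⁆, w⁆ = D ⁅y, ⁅z, w⁆⁆ - D ⁅z, ⁅y, w⁆⁆ := by
      rw [← map_sub, ← lie_lie]
    rw [h ⁅y, z⁆ w, h y ⁅z, w⁆, h z ⁅y, w⁆, h y z, h z w, h y w] at e0
    simp only [add_lie, sub_lie, smul_lie, lie_add, lie_sub, lie_smul, lie_lie] at e0
    rw [← lie_skew z y] at e0
    linear_combination (norm := module) -e0
  have hd : ∀ y z : g, d ⁅y, z⁆ = 0 := by
    rcases subsingleton_or_nontrivial g with hs | hn
    · intro y z; rw [Subsingleton.elim (⁅y, z⁆) 0, map_zero]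
    · intro y z
      have hmap : (d ⁅y, z⁆ • (LinearMap.id : g →ₗ[ℂ] g)) =
          ((ad ℂ g (d z • y - d y • z) : g →ₗ[ℂ] g) - d.smulRight ⁅y, z⁆
            - (d ∘ₗ (ad ℂ g z : g →ₗ[ℂ] g)).smulRight y
            + (d ∘ₗ (ad ℂ g y : g →ₗ[ℂ] g)).smulRight z) := by
        ext w
        have := key y z w
        simp only [LinearMap.smul_apply, LinearMap.id_apply, LinearMap.add_apply,
          LinearMap.sub_apply, LinearMap.smulRight_apply, LinearMap.comp_apply,
          LieAlgebra.ad_apply, sub_lie, smul_lie]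
        linear_combination (norm := module) this
      have htr := congrArg (LinearMap.trace ℂ g) hmap
      simp only [map_smul, map_add, map_sub, LinearMap.trace_id, aux_trace_smulRight,
        aux_trace_ad, smul_eq_mul, LinearMap.comp_apply, LieAlgebra.ad_apply] at htr
      -- htr : d ⁅y,z⁆ * finrank = 0 - d ⁅y,z⁆ - d ⁅z,y⁆ + d ⁅y,z⁆
      have hzy : d ⁅z, y⁆ = - d ⁅y, z⁆ := by rw [← lie_skew, map_neg]
      rw [hzy] at htr
      have hne : (Module.finrank ℂ g : ℂ) ≠ 1 := by
        have h1 : Module.finrank ℂ g ≠ 1 := by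
          intro h1
          have habel : IsLieAbelian g := by
            have b := Module.finBasisOfFinrankEq ℂ g h1
            constructor
            intro x u
            rw [← b.sum_repr x, ← b.sum_repr u]
            simp [Fin.sum_univ_one]
          have := LieAlgebra.subsingleton_of_hasTrivialRadical_lie_abelian (R := ℂ) (L := g)
          exact (not_subsingleton g) this
        exact_mod_cast h1
      have hmul : d ⁅y, z⁆ * ((Module.finrank ℂ g : ℂ) - 1) = 0 := by
        linear_combination htr
      rcases mul_eq_zero.mp hmul with h0 | h0
      · exact h0
      · exact absurd (by linear_combination h0) hne
  have hd0 : d = 0 := aux_vanish d hd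
  refine ⟨hd0, fun y z => ?_⟩
  have := h y z
  rw [hd0] at this
  simpa using this
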